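/- Let r₁, r₂ > 0. Then C₁₁(ε) + C₁₂(ε) converges, as ε → 0⁺, to (4π r₁ r₂/(r₁+r₂)) · ( −γ − ψ(r₂/(r₁+r₂)) ), where ψ(w) := Γ'(w)/Γ(w) is the logarithmic derivative of the real Gamma function and γ is the Euler–Mascheroni constant. Likewise C₂₂(ε) + C₂₁(ε) converges to (4π r₁ r₂/(r₁+r₂)) · ( −γ − ψ(r₁/(r₁+r₂)) ). -/

import Mathlib

open Real Filter Topology

/-- Half-distance between the fixed points of the composed reflections. -/
noncomputable def alphaBi (r₁ r₂ ε : ℝ) : ℝ :=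
  Real.sqrt (ε * (2 * r₁ + ε) * (2 * r₂ + ε) * (2 * r₁ + 2 * r₂ + ε)) /
    (2 * (r₁ + r₂ + ε))

/-- Bispherical coordinate of the boundary of the first sphere. -/
noncomputable def xi1 (r₁ r₂ ε : ℝ) : ℝ := Real.arsinh (alphaBi r₁ r₂ ε / r₁)

/-- Bispherical coordinate of the boundary of the second sphere. -/
noncomputable def xi2 (r₁ r₂ ε : ℝ) : ℝ := Real.arsinh (alphaBi r₁ r₂ ε / r₂)

/-- Capacitance coefficient C₁₁. -/
noncomputable def C11 (r₁ r₂ ε : ℝ) : ℝ :=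
  8 * π * alphaBi r₁ r₂ ε *
    ∑' n : ℕ, Real.exp ((2 * n + 1) * xi2 r₁ r₂ ε) /
      (Real.exp ((2 * n + 1) * (xi1 r₁ r₂ ε + xi2 r₁ r₂ ε)) - 1)

/-- Capacitance coefficient C₂₂. -/
noncomputable def C22 (r₁ r₂ ε : ℝ) : ℝ :=
  8 * π * alphaBi r₁ r₂ ε *
    ∑' n : ℕ, Real.exp ((2 * n + 1) * xi1 r₁ r₂ ε) /
      (Real.exp ((2 * n + 1) * (xi1 r₁ r₂ ε + xi2 r₁ r₂ ε)) - 1)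

/-- Capacitance coefficient C₁₂. -/
noncomputable def C12 (r₁ r₂ ε : ℝ) : ℝ :=
  -(8 * π * alphaBi r₁ r₂ ε *
    ∑' n : ℕ, 1 / (Real.exp ((2 * n + 1) * (xi1 r₁ r₂ ε + xi2 r₁ r₂ ε)) - 1))

/-- Capacitance coefficient C₂₁. -/
noncomputable def C21 (r₁ r₂ ε : ℝ) : ℝ := C12 r₁ r₂ ε

/-- The digamma function ψ(w) = Γ'(w)/Γ(w). -/
noncomputable def digamma (w : ℝ) : ℝ := deriv Real.Gamma w / Real.Gamma w

lemma sq_le_exp' {c : ℝ} (hc : 0 ≤ c) : c ^ 2 ≤ Real.exp c := by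
  have h4 : Real.exp c = (Real.exp (c/4)) ^ (4:ℕ) := by
    rw [← Real.exp_nat_mul]; norm_num; ring_nf
  have h1 : c/4 + 1 ≤ Real.exp (c/4) := Real.add_one_le_exp _
  have h2 : c ≤ (c/4 + 1)^2 := by nlinarith [sq_nonneg (1 - c/4)]
  have h3 : (c/4 + 1)^2 ≤ (Real.exp (c/4))^2 := by nlinarith [Real.exp_pos (c/4)]
  calc c ^ 2 ≤ ((c/4+1)^2)^2 := by nlinarith
    _ ≤ ((Real.exp (c/4))^2)^2 := by nlinarith [sq_nonneg (c/4+1), Real.exp_pos (c/4)]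
    _ = Real.exp c := by rw [h4]; ring

lemma cosh_div_bound {c : ℝ} (hc : 0 < c) : Real.cosh c / Real.sinh c ^ 2 ≤ 6 / c ^ 2 := by
  have hs : 0 < Real.sinh c := by rwa [Real.sinh_pos_iff]
  rw [div_le_div_iff₀ (by positivity) (by positivity)]
  rcases le_total c 1 with h1 | h1
  · have hcosh : Real.cosh c ≤ 2 := by
      rw [Real.cosh_eq]
      have h2 : Real.exp c ≤ Real.exp 1 := Real.exp_le_exp.mpr h1
      have h3 : Real.exp 1 < 2.7182818286 := Real.exp_one_lt_d9
      have h4 : Real.exp (-c) ≤ 1 := Real.exp_le_one_iff.mpr (by linarith)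
      linarith
    have hsinh : c ≤ Real.sinh c := Real.self_le_sinh_iff.mpr hc.le
    nlinarith
  · have hE2 : 2 ≤ Real.exp c := by
      have := Real.add_one_le_exp (1:ℝ)
      have h2 : Real.exp 1 ≤ Real.exp c := Real.exp_le_exp.mpr h1
      linarith
    have hcE : c ^ 2 ≤ Real.exp c := sq_le_exp' hc.le
    have hEi : Real.exp (-c) = (Real.exp c)⁻¹ := Real.exp_neg c
    have hE0 : (0:ℝ) < Real.exp c := Real.exp_pos c
    have hprod : Real.exp c * (Real.exp c)⁻¹ = 1 := mul_inv_cancel₀ hE0.ne'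
    have hinv : (0:ℝ) < (Real.exp c)⁻¹ := by positivity
    rw [Real.cosh_eq, Real.sinh_eq, hEi]
    nlinarith [sq_nonneg ((Real.exp c)⁻¹), mul_pos hE0 hinv]

lemma inv_sinh_sub_le {u v : ℝ} (hu : 0 < u) (huv : u < v) :
    1 / Real.sinh u - 1 / Real.sinh v ≤ (v - u) * (6 / u ^ 2) := by
  have hderiv : ∀ x ∈ Set.Ioo u v,
      HasDerivAt (fun y => 1 / Real.sinh y) (-(Real.cosh x / Real.sinh x ^ 2)) x := by
    intro x hx
    have hx0 : 0 < x := hu.trans hx.1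
    have hs : Real.sinh x ≠ 0 := (Real.sinh_pos_iff.mpr hx0).ne'
    have := (Real.hasDerivAt_sinh x).inv hs
    simp only [one_div]
    exact this.congr_deriv (by ring)
  have hcont : ContinuousOn (fun y => 1 / Real.sinh y) (Set.Icc u v) := by
    apply ContinuousOn.div continuousOn_const Real.continuous_sinh.continuousOn
    intro x hx
    exact (Real.sinh_pos_iff.mpr (hu.trans_le hx.1)).ne'
  obtain ⟨c, hc, hcs⟩ := exists_hasDerivAt_eq_slope (fun y => 1 / Real.sinh y)
    (fun x => -(Real.cosh x / Real.sinh x ^ 2)) huv hcont hderiv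
  have hc0 : 0 < c := hu.trans hc.1
  have hvu : (0:ℝ) < v - u := by linarith
  have h1 : 1 / Real.sinh u - 1 / Real.sinh v
      = (v - u) * (Real.cosh c / Real.sinh c ^ 2) := by
    have := hcs
    field_simp at this ⊢
    nlinarith [this]
  rw [h1]
  have h2 : Real.cosh c / Real.sinh c ^ 2 ≤ 6 / u ^ 2 := by
    refine (cosh_div_bound hc0).trans ?_
    gcongr
    exact hc.1.le
  exact mul_le_mul_of_nonneg_left h2 hvu.le

lemma hasSum_exp_negmul (x : ℝ) (hx : 0 < x) :
    HasSum (fun k : ℕ => Real.exp (-(((k : ℝ) + 1) * x))) (1 / (Real.exp x - 1)) := by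
  have h1 : ∀ k : ℕ, Real.exp (-(((k : ℝ) + 1) * x))
      = Real.exp (-x) * (Real.exp (-x)) ^ k := by
    intro k
    rw [← Real.exp_nat_mul, ← Real.exp_add]
    congr 1; push_cast; ring
  have hr0 : (0:ℝ) ≤ Real.exp (-x) := (Real.exp_pos _).le
  have hr1 : Real.exp (-x) < 1 := Real.exp_lt_one_iff.mpr (by linarith)
  have hg := (hasSum_geometric_of_lt_one hr0 hr1).mul_left (Real.exp (-x))
  have hE1 : 1 < Real.exp x := by rw [← Real.exp_zero]; exact Real.exp_lt_exp.mpr hx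
  have hval : Real.exp (-x) * (1 - Real.exp (-x))⁻¹ = 1 / (Real.exp x - 1) := by
    rw [Real.exp_neg]
    have hE0 : Real.exp x ≠ 0 := (Real.exp_pos x).ne'
    have : Real.exp x - 1 ≠ 0 := by linarith
    field_simp
  rw [funext h1]
  rw [← hval]
  exact hg

lemma hasSum_exp_odd (x : ℝ) (hx : 0 < x) :
    HasSum (fun n : ℕ => Real.exp (-((2 * (n : ℝ) + 1) * x))) (1 / (2 * Real.sinh x)) := by
  have h1 : ∀ n : ℕ, Real.exp (-((2 * (n : ℝ) + 1) * x))
      = Real.exp (-x) * (Real.exp (-(2*x))) ^ n := by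
    intro n
    rw [← Real.exp_nat_mul, ← Real.exp_add]
    congr 1; push_cast; ring
  have hr0 : (0:ℝ) ≤ Real.exp (-(2*x)) := (Real.exp_pos _).le
  have hr1 : Real.exp (-(2*x)) < 1 := Real.exp_lt_one_iff.mpr (by linarith)
  have hg := (hasSum_geometric_of_lt_one hr0 hr1).mul_left (Real.exp (-x))
  have hval : Real.exp (-x) * (1 - Real.exp (-(2*x)))⁻¹ = 1 / (2 * Real.sinh x) := by
    have h2 : Real.exp (-(2*x)) = (Real.exp x)⁻¹ * (Real.exp x)⁻¹ := by
      rw [← Real.exp_neg, ← Real.exp_add]; congr 1; ring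
    have hE1 : 1 < Real.exp x := by rw [← Real.exp_zero]; exact Real.exp_lt_exp.mpr hx
    have hE0 : Real.exp x ≠ 0 := (Real.exp_pos x).ne'
    have hs : 0 < Real.sinh x := Real.sinh_pos_iff.mpr hx
    rw [Real.sinh_eq, Real.exp_neg, h2]
    have h3 : 1 - (Real.exp x)⁻¹ * (Real.exp x)⁻¹ ≠ 0 := by
      have h5 := hr1; rw [h2] at h5; linarith
    field_simp
  rw [funext h1, ← hval]
  exact hg

lemma one_lt_exp_mul {s q : ℝ} (hs : 0 < s) (hq : 0 < q) : 1 < Real.exp (s * q) := by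
  rw [← Real.exp_zero]; exact Real.exp_lt_exp.mpr (by positivity)

lemma summable_main {a q : ℝ} (ha : 0 ≤ a) (haq : a < q) :
    Summable (fun n : ℕ => Real.exp ((2 * (n:ℝ) + 1) * a) / (Real.exp ((2 * (n:ℝ) + 1) * q) - 1)) := by
  have hq : 0 < q := lt_of_le_of_lt ha haq
  have hKpos : (0:ℝ) < 1 - Real.exp (-q) := by
    have : Real.exp (-q) < 1 := Real.exp_lt_one_iff.mpr (by linarith)
    linarith
  have hgeo : Summable (fun n : ℕ =>
      (Real.exp (a - q) / (1 - Real.exp (-q))) * (Real.exp (2*(a - q))) ^ n) :=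
    Summable.mul_left _ (summable_geometric_of_lt_one (Real.exp_pos _).le
      (Real.exp_lt_one_iff.mpr (by nlinarith)))
  refine Summable.of_nonneg_of_le (fun n => ?_) (fun n => ?_) hgeo
  · have hs : (0:ℝ) < 2 * (n:ℝ) + 1 := by positivity
    have h1 : (1:ℝ) < Real.exp ((2*(n:ℝ)+1) * q) := one_lt_exp_mul hs hq
    apply div_nonneg (Real.exp_pos _).le
    linarith
  · set s : ℝ := 2 * (n:ℝ) + 1 with hsdef
    have hs1 : (1:ℝ) ≤ s := by
      have := Nat.cast_nonneg (α := ℝ) n; rw [hsdef]; linarith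
    have hs : (0:ℝ) < s := by linarith
    have h1 : (1:ℝ) < Real.exp (s * q) := one_lt_exp_mul hs hq
    -- exp(s q) - 1 ≥ exp(s q) (1 - exp(-q))
    have hden : Real.exp (s * q) * (1 - Real.exp (-q)) ≤ Real.exp (s * q) - 1 := by
      have h2 : Real.exp (s * q) * Real.exp (-q) = Real.exp (s * q - q) := by
        rw [← Real.exp_add]; ring_nf
      have h3 : (1:ℝ) ≤ Real.exp (s * q - q) := by
        rw [← Real.exp_zero]; apply Real.exp_le_exp.mpr; nlinarith
      nlinarith
    have hstep : Real.exp (s * a) / (Real.exp (s * q) - 1)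
        ≤ Real.exp (s * a) / (Real.exp (s * q) * (1 - Real.exp (-q))) := by
      apply div_le_div_of_nonneg_left (Real.exp_pos _).le _ hden
      positivity
    refine hstep.trans (le_of_eq ?_)
    rw [← div_div, ← Real.exp_sub, div_mul_eq_mul_div, ← Real.exp_nat_mul, ← Real.exp_add]
    congr 2
    rw [hsdef]; push_cast; ring

lemma series_identity {a q : ℝ} (ha : 0 < a) (haq : a < q) :
    ∑' n : ℕ, (Real.exp ((2 * (n:ℝ) + 1) * a) - 1) / (Real.exp ((2 * (n:ℝ) + 1) * q) - 1)
      = ∑' k : ℕ, (1 / (2 * Real.sinh (((k:ℝ) + 1) * q - a)) - 1 / (2 * Real.sinh (((k:ℝ) + 1) * q))) := by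
  have hq : 0 < q := ha.trans haq
  set F : ℕ → ℕ → ℝ := fun n k =>
    Real.exp (-((2 * (n:ℝ) + 1) * (((k:ℝ) + 1) * q - a))) -
      Real.exp (-((2 * (n:ℝ) + 1) * (((k:ℝ) + 1) * q))) with hF
  have hargpos : ∀ k : ℕ, 0 < ((k:ℝ) + 1) * q - a := by
    intro k
    have : q ≤ ((k:ℝ)+1) * q := by nlinarith [Nat.cast_nonneg (α := ℝ) k]
    linarith
  have hF0 : ∀ n k, 0 ≤ F n k := by
    intro n k
    simp only [hF, sub_nonneg]
    apply Real.exp_le_exp.mpr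
    have hs : (0:ℝ) < 2 * (n:ℝ) + 1 := by positivity
    nlinarith
  -- rows
  have hrow : ∀ n : ℕ, HasSum (fun k => F n k)
      ((Real.exp ((2 * (n:ℝ) + 1) * a) - 1) / (Real.exp ((2 * (n:ℝ) + 1) * q) - 1)) := by
    intro n
    set s : ℝ := 2 * (n:ℝ) + 1 with hsdef
    have hs : (0:ℝ) < s := by positivity
    have heq : ∀ k : ℕ, F n k = (Real.exp (s * a) - 1) * Real.exp (-(((k:ℝ) + 1) * (s * q))) := by
      intro k
      simp only [hF, sub_mul, one_mul, ← Real.exp_add]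
      congr 2 <;> ring
    rw [funext heq]
    have := (hasSum_exp_negmul (s * q) (by positivity)).mul_left (Real.exp (s * a) - 1)
    rwa [mul_one_div] at this
  -- columns
  have hcol : ∀ k : ℕ, HasSum (fun n => F n k)
      (1 / (2 * Real.sinh (((k:ℝ) + 1) * q - a)) - 1 / (2 * Real.sinh (((k:ℝ) + 1) * q))) := by
    intro k
    exact (hasSum_exp_odd _ (hargpos k)).sub (hasSum_exp_odd _ (by positivity))
  -- summability of the double family
  have hsum : Summable (Function.uncurry F) := by
    refine (summable_prod_of_nonneg (fun p => hF0 p.1 p.2)).mpr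
      ⟨fun n => (hrow n).summable, ?_⟩
    refine Summable.of_nonneg_of_le (fun n => tsum_nonneg (fun k => hF0 n k)) (fun n => ?_)
      (summable_main (le_of_lt ha) haq)
    rw [(hrow n).tsum_eq]
    have h1 : (1:ℝ) < Real.exp ((2 * (n:ℝ) + 1) * q) := one_lt_exp_mul (by positivity) hq
    gcongr
    · linarith
  calc ∑' n : ℕ, (Real.exp ((2 * (n:ℝ) + 1) * a) - 1) / (Real.exp ((2 * (n:ℝ) + 1) * q) - 1)
      = ∑' (n : ℕ) (k : ℕ), F n k := by
        exact tsum_congr fun n => ((hrow n).tsum_eq).symm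
    _ = ∑' (k : ℕ) (n : ℕ), F n k := (hsum.tsum_comm).symm
    _ = ∑' k : ℕ, (1 / (2 * Real.sinh (((k:ℝ) + 1) * q - a)) - 1 / (2 * Real.sinh (((k:ℝ) + 1) * q))) := by
        exact tsum_congr fun k => (hcol k).tsum_eq

lemma tendsto_div_sinh {l : Filter ℝ} {αf qf mf : ℝ → ℝ} {R c : ℝ} (hc : 0 < c)
    (hαq : Tendsto (fun ε => αf ε / qf ε) l (𝓝 R))
    (hmq : Tendsto (fun ε => mf ε / qf ε) l (𝓝 c))
    (hq0 : Tendsto qf l (𝓝 0))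
    (hev : ∀ᶠ ε in l, 0 < qf ε ∧ 0 < mf ε) :
    Tendsto (fun ε => αf ε / Real.sinh (mf ε)) l (𝓝 (R / c)) := by
  have hm0 : Tendsto mf l (𝓝 0) := by
    have h := hmq.mul hq0
    rw [mul_zero] at h
    apply h.congr'
    filter_upwards [hev] with ε h1
    rw [div_mul_cancel₀ _ h1.1.ne']
  have hslope : Tendsto (fun x : ℝ => Real.sinh x / x) (𝓝[≠] (0:ℝ)) (𝓝 1) := by
    have h := hasDerivAt_iff_tendsto_slope.mp (Real.hasDerivAt_sinh 0)
    rw [Real.cosh_zero] at h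
    apply h.congr
    intro x
    simp [slope_def_field]
  have hmne : Tendsto mf l (𝓝[≠] (0:ℝ)) := by
    apply tendsto_nhdsWithin_of_tendsto_nhds_of_eventually_within _ hm0
    filter_upwards [hev] with ε h1
    exact h1.2.ne'
  have h2 : Tendsto (fun ε => Real.sinh (mf ε) / mf ε) l (𝓝 1) := hslope.comp hmne
  have h3 : Tendsto (fun ε => Real.sinh (mf ε) / qf ε) l (𝓝 c) := by
    have h := h2.mul hmq
    rw [one_mul] at h
    apply h.congr'
    filter_upwards [hev] with ε h1
    rw [div_mul_div_comm, mul_comm (Real.sinh (mf ε)) (mf ε),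
      mul_div_mul_left _ _ h1.2.ne']
  have h4 := hαq.div h3 hc.ne'
  apply h4.congr'
  filter_upwards [hev] with ε h1
  have hs : Real.sinh (mf ε) ≠ 0 := (Real.sinh_pos_iff.mpr h1.2).ne'
  have hqne : qf ε ≠ 0 := h1.1.ne'
  simp only [Pi.div_apply]
  field_simp

lemma summable_inv_sq_shift : Summable (fun k : ℕ => 1 / ((k:ℝ) + 1) ^ 2) := by
  have h : Summable (fun n : ℕ => 1 / (n:ℝ) ^ 2) :=
    Real.summable_one_div_nat_pow.mpr one_lt_two
  have h2 := (summable_nat_add_iff 1).mpr h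
  apply h2.congr
  intro k
  push_cast
  ring

lemma tendsto_alpha_tsum {l : Filter ℝ} {αf af qf : ℝ → ℝ} {w R : ℝ}
    (hw0 : 0 < w) (hw1 : w < 1) (hR0 : 0 ≤ R)
    (hev : ∀ᶠ ε in l, 0 < af ε ∧ af ε < qf ε ∧ 0 ≤ αf ε)
    (hq0 : Tendsto qf l (𝓝 0))
    (haq : Tendsto (fun ε => af ε / qf ε) l (𝓝 w))
    (hαq : Tendsto (fun ε => αf ε / qf ε) l (𝓝 R)) :
    Tendsto (fun ε => αf ε * ∑' k : ℕ, (1 / (2 * Real.sinh (((k:ℝ)+1) * qf ε - af ε))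
        - 1 / (2 * Real.sinh (((k:ℝ)+1) * qf ε)))) l
      (𝓝 (∑' k : ℕ, R * (1 / (2 * ((k:ℝ)+1-w)) - 1 / (2 * ((k:ℝ)+1))))) := by
  set wb : ℝ := (1 + w) / 2 with hwb
  have hwb1 : wb < 1 := by rw [hwb]; linarith
  have hwwb : w < wb := by rw [hwb]; linarith
  have hwb0 : 0 < wb := by rw [hwb]; linarith
  set M : ℝ := 3 * (R * w + 1) / (1 - wb) ^ 2 with hM
  have hMsum : Summable (fun k : ℕ => M / ((k:ℝ) + 1) ^ 2) := by
    have := summable_inv_sq_shift.mul_left M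
    apply this.congr
    intro k
    rw [mul_one_div]
  have key := tendsto_tsum_of_dominated_convergence
    (f := fun (ε : ℝ) (k : ℕ) => αf ε * (1 / (2 * Real.sinh (((k:ℝ)+1) * qf ε - af ε))
        - 1 / (2 * Real.sinh (((k:ℝ)+1) * qf ε))))
    (g := fun k : ℕ => R * (1 / (2 * ((k:ℝ)+1-w)) - 1 / (2 * ((k:ℝ)+1))))
    (𝓕 := l) (bound := fun k : ℕ => M / ((k:ℝ) + 1) ^ 2) hMsum ?_ ?_
  · exact key.congr (fun ε => tsum_mul_left)
  · -- pointwise convergence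
    intro k
    have hev' : ∀ᶠ ε in l, 0 < qf ε ∧ 0 < ((k:ℝ)+1) * qf ε - af ε := by
      filter_upwards [hev] with ε ⟨h1, h2, h3⟩
      have hq : 0 < qf ε := h1.trans h2
      constructor
      · exact hq
      · have : qf ε ≤ ((k:ℝ)+1) * qf ε := by nlinarith [Nat.cast_nonneg (α := ℝ) k]
        linarith
    have hev'' : ∀ᶠ ε in l, 0 < qf ε ∧ 0 < ((k:ℝ)+1) * qf ε := by
      filter_upwards [hev'] with ε ⟨h1, h2⟩
      exact ⟨h1, by positivity⟩
    have hm1 : Tendsto (fun ε => (((k:ℝ)+1) * qf ε - af ε) / qf ε) l (𝓝 ((k:ℝ)+1-w)) := by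
      have h := (tendsto_const_nhds (x := (k:ℝ)+1) (f := l)).sub haq
      apply h.congr'
      filter_upwards [hev'] with ε ⟨h1, _⟩
      field_simp
    have hm2 : Tendsto (fun ε => (((k:ℝ)+1) * qf ε) / qf ε) l (𝓝 ((k:ℝ)+1)) := by
      have h := tendsto_const_nhds (x := (k:ℝ)+1) (f := l)
      apply h.congr'
      filter_upwards [hev'] with ε ⟨h1, _⟩
      rw [mul_div_cancel_right₀ _ h1.ne']
    have hc1 : (0:ℝ) < (k:ℝ)+1-w := by
      have : (0:ℝ) ≤ (k:ℝ) := Nat.cast_nonneg k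
      linarith
    have hc2 : (0:ℝ) < (k:ℝ)+1 := by positivity
    have T1 := tendsto_div_sinh hc1 hαq hm1 hq0 hev'
    have T2 := tendsto_div_sinh hc2 hαq hm2 hq0 hev''
    have T3 := (T1.sub T2).div_const 2
    have hval : ((fun k : ℕ => R * (1 / (2 * ((k:ℝ)+1-w)) - 1 / (2 * ((k:ℝ)+1)))) k)
        = (R / ((k:ℝ)+1-w) - R / ((k:ℝ)+1)) / 2 := by
      show R * (1 / (2 * ((k:ℝ)+1-w)) - 1 / (2 * ((k:ℝ)+1)))
        = (R / ((k:ℝ)+1-w) - R / ((k:ℝ)+1)) / 2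
      have h1 := hc1.ne'
      have h2 := hc2.ne'
      field_simp
    beta_reduce at hval
    rw [hval]
    refine T3.congr (fun ε => ?_)
    show (αf ε / Real.sinh (((k:ℝ)+1) * qf ε - af ε) - αf ε / Real.sinh (((k:ℝ)+1) * qf ε)) / 2
      = αf ε * (1 / (2 * Real.sinh (((k:ℝ)+1) * qf ε - af ε))
          - 1 / (2 * Real.sinh (((k:ℝ)+1) * qf ε)))
    rw [mul_sub, mul_one_div, mul_one_div, div_mul_eq_div_div_swap, div_mul_eq_div_div_swap]
    ring
  · -- domination
    have h1wb : (0:ℝ) < 1 - wb := by linarith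
    have hwbev : ∀ᶠ ε in l, af ε / qf ε < wb := haq.eventually_lt_const hwwb
    have hprod : Tendsto (fun ε => (αf ε / qf ε) * (af ε / qf ε)) l (𝓝 (R * w)) := hαq.mul haq
    have hprodev : ∀ᶠ ε in l, (αf ε / qf ε) * (af ε / qf ε) < R * w + 1 :=
      hprod.eventually_lt_const (by linarith)
    filter_upwards [hev, hwbev, hprodev] with ε h1 h2 h3
    obtain ⟨ha0, haq', hα0⟩ := h1
    intro k
    have hq : 0 < qf ε := ha0.trans haq'
    have hk0 : (0:ℝ) ≤ (k:ℝ) := Nat.cast_nonneg k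
    set u : ℝ := ((k:ℝ)+1) * qf ε - af ε with hu_def
    set v : ℝ := ((k:ℝ)+1) * qf ε with hv_def
    have hkq : qf ε ≤ v := by rw [hv_def]; nlinarith
    have hu : 0 < u := by rw [hu_def]; linarith
    have huv : u < v := by rw [hu_def]; linarith
    have hsu : 0 < Real.sinh u := Real.sinh_pos_iff.mpr hu
    have hsv : 0 < Real.sinh v := Real.sinh_pos_iff.mpr (hu.trans huv)
    have hsuv : Real.sinh u ≤ Real.sinh v := Real.sinh_le_sinh.mpr huv.le
    have ht0 : 0 ≤ 1/(2*Real.sinh u) - 1/(2*Real.sinh v) := by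
      have := one_div_le_one_div_of_le (by linarith : (0:ℝ) < 2 * Real.sinh u)
        (by linarith : 2 * Real.sinh u ≤ 2 * Real.sinh v)
      linarith
    rw [Real.norm_eq_abs, abs_of_nonneg (mul_nonneg hα0 ht0)]
    have hd := inv_sinh_sub_le hu huv
    have hvu : v - u = af ε := by rw [hu_def]; ring
    have step1 : αf ε * (1/(2*Real.sinh u) - 1/(2*Real.sinh v)) ≤ 3 * αf ε * af ε / u^2 := by
      have h6 : 1/(2*Real.sinh u) - 1/(2*Real.sinh v) ≤ af ε * (6/u^2) / 2 := by
        rw [hvu] at hd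
        have h5 : 1/(2*Real.sinh u) - 1/(2*Real.sinh v)
            = (1/Real.sinh u - 1/Real.sinh v)/2 := by ring
        rw [h5]; linarith
      calc αf ε * (1/(2*Real.sinh u) - 1/(2*Real.sinh v)) ≤ αf ε * (af ε * (6/u^2)/2) :=
            mul_le_mul_of_nonneg_left h6 hα0
        _ = 3 * αf ε * af ε / u^2 := by ring
    have hafwb : af ε ≤ wb * qf ε := by
      rw [div_lt_iff₀ hq] at h2
      linarith
    have hulb : ((k:ℝ)+1) * qf ε * (1 - wb) ≤ u := by
      rw [hu_def, hv_def]
      nlinarith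
    clear_value u v
    have hulb0 : 0 < ((k:ℝ)+1) * qf ε * (1 - wb) := by positivity
    have husq : (((k:ℝ)+1) * qf ε * (1 - wb))^2 ≤ u^2 := pow_le_pow_left₀ hulb0.le hulb 2
    have step2 : 3 * αf ε * af ε / u^2 ≤ 3 * αf ε * af ε / ((((k:ℝ)+1) * qf ε * (1 - wb))^2) := by
      gcongr
    have step3 : 3 * αf ε * af ε / ((((k:ℝ)+1) * qf ε * (1 - wb))^2)
        = 3 * ((αf ε / qf ε) * (af ε / qf ε)) / (1 - wb)^2 / ((k:ℝ)+1)^2 := by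
      field_simp
    have step4 : 3 * ((αf ε / qf ε) * (af ε / qf ε)) / (1 - wb)^2 / ((k:ℝ)+1)^2
        ≤ M / ((k:ℝ)+1)^2 := by
      rw [hM]
      gcongr
    calc αf ε * (1/(2*Real.sinh u) - 1/(2*Real.sinh v)) ≤ 3 * αf ε * af ε / u^2 := step1
      _ ≤ 3 * αf ε * af ε / ((((k:ℝ)+1) * qf ε * (1 - wb))^2) := step2
      _ = 3 * ((αf ε / qf ε) * (af ε / qf ε)) / (1 - wb)^2 / ((k:ℝ)+1)^2 := step3
      _ ≤ M / ((k:ℝ)+1)^2 := step4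

lemma digamma_series {w : ℝ} (hw : 0 < w) (hw1 : w ≤ 1) :
    digamma w = -Real.eulerMascheroniConstant + ∑' k : ℕ, (1 / ((k:ℝ) + 1) - 1 / ((k:ℝ) + w)) := by
  set f : ℝ → ℝ := Real.log ∘ Real.Gamma with hf
  have hdiff : ∀ {x : ℝ}, 0 < x → DifferentiableAt ℝ f x := by
    intro x hx
    refine ((Real.differentiableAt_Gamma ?_).log (Real.Gamma_ne_zero ?_)) <;>
      exact fun m => ne_of_gt (by have : (0:ℝ) ≤ m := Nat.cast_nonneg m; linarith)
  have hderf : ∀ {x : ℝ}, 0 < x → deriv f x = deriv Real.Gamma x / Real.Gamma x := by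
    intro x hx
    rw [hf, Function.comp_def]
    exact deriv.log (Real.differentiableAt_Gamma
      (fun m => ne_of_gt (by have : (0:ℝ) ≤ m := Nat.cast_nonneg m; linarith)))
      (Real.Gamma_pos_of_pos hx).ne'
  have h_rec : ∀ x : ℝ, 0 < x → f (x + 1) = f x + Real.log x := by
    intro x hx
    simp only [hf, Function.comp_apply, Real.Gamma_add_one hx.ne',
      Real.log_mul hx.ne' (Real.Gamma_pos_of_pos hx).ne', add_comm]
  have hder_rec : ∀ x : ℝ, 0 < x → deriv f (x + 1) = deriv f x + 1 / x := by
    intro x hx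
    rw [← deriv_comp_add_const, one_div, ← Real.deriv_log,
      ← deriv_add (hdiff (by positivity)) (Real.differentiableAt_log hx.ne')]
    apply Filter.EventuallyEq.deriv_eq
    filter_upwards [eventually_gt_nhds hx] using h_rec
  have hder_w : ∀ n : ℕ, deriv f (w + n) = deriv f w + ∑ j ∈ Finset.range n, 1 / (w + j) := by
    intro n
    induction n with
    | zero => simp
    | succ n ih =>
      have h1 : w + (n + 1 : ℕ) = (w + n) + 1 := by push_cast; ring
      rw [h1, hder_rec (w + n) (by positivity), ih, Finset.sum_range_succ]
      rw [add_assoc]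
  have hnat : ∀ n : ℕ, deriv f ((n:ℝ) + 1) = -Real.eulerMascheroniConstant + harmonic n := by
    intro n
    rw [hderf (by positivity), Real.deriv_Gamma_nat n, Real.Gamma_nat_eq_factorial]
    have hfac : ((Nat.factorial n : ℝ)) ≠ 0 :=
      (Nat.cast_pos.mpr (Nat.factorial_pos n)).ne'
    rw [mul_comm, mul_div_assoc, div_self hfac, mul_one]
  have hmono : MonotoneOn (deriv f) (Set.Ioi 0) :=
    Real.convexOn_log_Gamma.monotoneOn_deriv (fun x hx => hdiff hx)
  -- sandwich at n+1
  have hsand : ∀ n : ℕ,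
      (-Real.eulerMascheroniConstant + (harmonic n : ℝ)
        ≤ deriv f w + ∑ j ∈ Finset.range (n+1), 1 / (w + j)) ∧
      (deriv f w + ∑ j ∈ Finset.range (n+1), 1 / (w + j)
        ≤ -Real.eulerMascheroniConstant + (harmonic (n+1) : ℝ)) := by
    intro n
    have h1 : deriv f ((n:ℝ) + 1) ≤ deriv f (w + (n + 1 : ℕ)) := by
      apply hmono (Set.mem_Ioi.mpr (by positivity)) (Set.mem_Ioi.mpr (by push_cast; positivity))
      push_cast; linarith
    have h2 : deriv f (w + (n + 1 : ℕ)) ≤ deriv f (((n+1:ℕ):ℝ) + 1) := by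
      apply hmono (Set.mem_Ioi.mpr (by push_cast; positivity)) (Set.mem_Ioi.mpr (by positivity))
      push_cast; linarith
    rw [hder_w (n+1)] at h1 h2
    rw [hnat n] at h1
    rw [hnat (n+1)] at h2
    exact ⟨h1, h2⟩
  -- summability
  have hterm : ∀ k : ℕ, 1 / ((k:ℝ) + w) - 1 / ((k:ℝ) + 1) ≤ 1 / w * (1 / ((k:ℝ)+1)^2) := by
    intro k
    have hk0 : (0:ℝ) ≤ k := Nat.cast_nonneg k
    have hkw : 0 < (k:ℝ) + w := by linarith
    have hk1 : (0:ℝ) < (k:ℝ) + 1 := by linarith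
    rw [div_sub_div _ _ hkw.ne' hk1.ne', one_div_mul_one_div,
      div_le_div_iff₀ (by positivity) (by positivity)]
    nlinarith [mul_nonneg (mul_nonneg hk0 (by linarith : (0:ℝ) ≤ 1 - w)) hk1.le,
      mul_pos hw hk1, sq_nonneg ((k:ℝ)+1)]
  have hsummable : Summable (fun k : ℕ => 1 / ((k:ℝ) + 1) - 1 / ((k:ℝ) + w)) := by
    have hb : Summable (fun k : ℕ => 1 / w * (1 / ((k:ℝ)+1)^2)) := by
      have h : Summable (fun n : ℕ => 1 / (n:ℝ) ^ 2) :=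
        Real.summable_one_div_nat_pow.mpr one_lt_two
      have h2 := (summable_nat_add_iff 1).mpr h
      refine (h2.congr ?_).mul_left _
      intro k; push_cast; ring
    apply Summable.of_norm_bounded hb
    intro k
    have hk0 : (0:ℝ) ≤ k := Nat.cast_nonneg k
    have hkw : 0 < (k:ℝ) + w := by linarith
    have hk1 : (0:ℝ) < (k:ℝ) + 1 := by linarith
    rw [Real.norm_eq_abs, abs_of_nonpos (by
      have : 1 / ((k:ℝ) + 1) ≤ 1 / ((k:ℝ) + w) := one_div_le_one_div_of_le hkw (by linarith)
      linarith)]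
    have := hterm k
    linarith
  set S : ℝ := ∑' k : ℕ, (1 / ((k:ℝ) + 1) - 1 / ((k:ℝ) + w)) with hS
  have hT : Tendsto (fun n : ℕ => ∑ k ∈ Finset.range n, (1 / ((k:ℝ) + 1) - 1 / ((k:ℝ) + w)))
      atTop (𝓝 S) := hsummable.hasSum.tendsto_sum_nat
  have hH : ∀ n : ℕ, (harmonic n : ℝ) = ∑ k ∈ Finset.range n, 1 / ((k:ℝ) + 1) := by
    intro n
    rw [harmonic]
    push_cast
    exact Finset.sum_congr rfl (fun k _ => by rw [one_div])
  -- bounds in terms of partial sums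
  have hup : ∀ n : ℕ, deriv f w + Real.eulerMascheroniConstant
      ≤ ∑ k ∈ Finset.range (n+1), (1 / ((k:ℝ) + 1) - 1 / ((k:ℝ) + w)) := by
    intro n
    have h := (hsand n).2
    rw [hH (n+1)] at h
    rw [Finset.sum_sub_distrib]
    have hsum_eq : ∑ j ∈ Finset.range (n+1), 1 / (w + (j:ℝ))
        = ∑ j ∈ Finset.range (n+1), 1 / ((j:ℝ) + w) := by
      exact Finset.sum_congr rfl (fun j _ => by rw [add_comm])
    rw [← hsum_eq]
    linarith
  have hlo : ∀ n : ℕ, ∑ k ∈ Finset.range (n+1), (1 / ((k:ℝ) + 1) - 1 / ((k:ℝ) + w))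
      - 1 / ((n:ℝ)+1) ≤ deriv f w + Real.eulerMascheroniConstant := by
    intro n
    have h := (hsand n).1
    rw [hH n] at h
    rw [Finset.sum_sub_distrib]
    have hsum_eq : ∑ j ∈ Finset.range (n+1), 1 / (w + (j:ℝ))
        = ∑ j ∈ Finset.range (n+1), 1 / ((j:ℝ) + w) := by
      exact Finset.sum_congr rfl (fun j _ => by rw [add_comm])
    rw [← hsum_eq]
    have hHsucc : ∑ k ∈ Finset.range (n+1), 1 / ((k:ℝ) + 1)
        = (∑ k ∈ Finset.range n, 1 / ((k:ℝ) + 1)) + 1 / ((n:ℝ)+1) := Finset.sum_range_succ _ n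
    rw [hHsucc]
    linarith
  have hTshift : Tendsto (fun n : ℕ => ∑ k ∈ Finset.range (n+1), (1 / ((k:ℝ) + 1) - 1 / ((k:ℝ) + w)))
      atTop (𝓝 S) := hT.comp (tendsto_add_atTop_nat 1)
  have hle1 : deriv f w + Real.eulerMascheroniConstant ≤ S := ge_of_tendsto' hTshift hup
  have hle2 : S ≤ deriv f w + Real.eulerMascheroniConstant := by
    have hz : Tendsto (fun n : ℕ => 1 / ((n:ℝ) + 1)) atTop (𝓝 0) :=
      tendsto_one_div_add_atTop_nhds_zero_nat
    have := hTshift.sub hz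
    rw [sub_zero] at this
    exact le_of_tendsto' this hlo
  have hfinal : deriv f w + Real.eulerMascheroniConstant = S := le_antisymm hle1 hle2
  rw [digamma, ← hderf hw]
  linarith

lemma arsinh_ratio (r : ℝ) (hr : 0 < r) {l : Filter ℝ} {αf : ℝ → ℝ}
    (hα0 : Tendsto αf l (𝓝 0)) (hαpos : ∀ᶠ ε in l, 0 < αf ε) :
    Tendsto (fun ε => Real.arsinh (αf ε / r) / αf ε) l (𝓝 (1/r)) := by
  have hslope : Tendsto (fun x : ℝ => Real.arsinh x / x) (𝓝[≠] (0:ℝ)) (𝓝 1) := by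
    have h := hasDerivAt_iff_tendsto_slope.mp (Real.hasDerivAt_arsinh 0)
    have h1 : (Real.sqrt (1 + (0:ℝ) ^ 2))⁻¹ = 1 := by norm_num
    rw [h1] at h
    apply h.congr
    intro x
    simp [slope_def_field]
  have ht : Tendsto (fun ε => αf ε / r) l (𝓝[≠] (0:ℝ)) := by
    apply tendsto_nhdsWithin_of_tendsto_nhds_of_eventually_within
    · simpa using hα0.div_const r
    · filter_upwards [hαpos] with ε h
      exact (div_pos h hr).ne'
  have h2 := (hslope.comp ht).mul_const (1/r)
  rw [one_mul] at h2
  apply h2.congr'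
  filter_upwards [hαpos] with ε h
  show Real.arsinh (αf ε / r) / (αf ε / r) * (1/r) = Real.arsinh (αf ε / r) / αf ε
  rw [div_div_eq_mul_div, mul_one_div, div_div, mul_div_mul_right _ _ hr.ne']

lemma main_one (r₁ r₂ : ℝ) (hr₁ : 0 < r₁) (hr₂ : 0 < r₂) :
    Tendsto (fun ε => C11 r₁ r₂ ε + C12 r₁ r₂ ε) (𝓝[>] (0 : ℝ))
      (𝓝 (4 * π * r₁ * r₂ / (r₁ + r₂) *
        (-Real.eulerMascheroniConstant - digamma (r₂ / (r₁ + r₂))))) := by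
  set l : Filter ℝ := 𝓝[>] (0:ℝ) with hl
  set α : ℝ → ℝ := alphaBi r₁ r₂ with hα
  set w : ℝ := r₁ / (r₁ + r₂) with hw
  set R : ℝ := r₁ * r₂ / (r₁ + r₂) with hR
  have hr12 : 0 < r₁ + r₂ := by linarith
  -- eventual positivity of α
  have hαpos : ∀ᶠ ε in l, 0 < α ε := by
    filter_upwards [self_mem_nhdsWithin] with ε (hε : 0 < ε)
    rw [hα]
    unfold alphaBi
    apply div_pos (Real.sqrt_pos.mpr (by positivity)) (by positivity)
  -- α tends to 0
  have hα0 : Tendsto α l (𝓝 0) := by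
    have h1 : Continuous (fun ε : ℝ =>
        Real.sqrt (ε * (2 * r₁ + ε) * (2 * r₂ + ε) * (2 * r₁ + 2 * r₂ + ε))) := by
      fun_prop
    have h2 : ContinuousAt (fun ε : ℝ => 2 * (r₁ + r₂ + ε)) 0 := by fun_prop
    have h3 : ContinuousAt α 0 := by
      rw [hα]
      unfold alphaBi
      exact h1.continuousAt.div h2 (by norm_num; positivity)
    have hle : l ≤ 𝓝 (0:ℝ) := nhdsWithin_le_nhds
    have h4 := h3.tendsto.mono_left hle
    have h5 : α 0 = 0 := by
      rw [hα]; unfold alphaBi; simp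
    rwa [h5] at h4
  -- ratios
  have hx1 : Tendsto (fun ε => xi1 r₁ r₂ ε / α ε) l (𝓝 (1/r₁)) :=
    arsinh_ratio r₁ hr₁ hα0 hαpos
  have hx2 : Tendsto (fun ε => xi2 r₁ r₂ ε / α ε) l (𝓝 (1/r₂)) :=
    arsinh_ratio r₂ hr₂ hα0 hαpos
  set q : ℝ → ℝ := fun ε => xi1 r₁ r₂ ε + xi2 r₁ r₂ ε with hq
  have hsumr : (0:ℝ) < 1/r₁ + 1/r₂ := by positivity
  have hqα : Tendsto (fun ε => q ε / α ε) l (𝓝 (1/r₁ + 1/r₂)) := by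
    have := hx1.add hx2
    apply this.congr
    intro ε
    rw [hq]
    rw [add_div]
  have hxi1pos : ∀ᶠ ε in l, 0 < xi1 r₁ r₂ ε := by
    filter_upwards [hαpos] with ε h
    exact Real.arsinh_pos_iff.mpr (by positivity)
  have hxi2pos : ∀ᶠ ε in l, 0 < xi2 r₁ r₂ ε := by
    filter_upwards [hαpos] with ε h
    exact Real.arsinh_pos_iff.mpr (by positivity)
  have hev : ∀ᶠ ε in l, 0 < xi2 r₁ r₂ ε ∧ xi2 r₁ r₂ ε < q ε ∧ 0 ≤ α ε := by
    filter_upwards [hαpos, hxi1pos, hxi2pos] with ε h1 h2 h3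
    refine ⟨h3, ?_, h1.le⟩
    show xi2 r₁ r₂ ε < xi1 r₁ r₂ ε + xi2 r₁ r₂ ε
    linarith
  have hq0 : Tendsto q l (𝓝 0) := by
    have harc : Tendsto (fun x : ℝ => Real.arsinh x) (𝓝 0) (𝓝 0) := by
      simpa using Real.continuous_arsinh.tendsto 0
    have h1 : Tendsto (fun ε => Real.arsinh (α ε / r₁)) l (𝓝 0) := by
      have h := harc.comp (show Tendsto (fun ε => α ε / r₁) l (𝓝 0) by
        simpa using hα0.div_const r₁)
      exact h
    have h2 : Tendsto (fun ε => Real.arsinh (α ε / r₂)) l (𝓝 0) := by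
      have h := harc.comp (show Tendsto (fun ε => α ε / r₂) l (𝓝 0) by
        simpa using hα0.div_const r₂)
      exact h
    have h3 := h1.add h2
    rw [add_zero] at h3
    apply h3.congr
    intro ε
    show Real.arsinh (α ε / r₁) + Real.arsinh (α ε / r₂) = xi1 r₁ r₂ ε + xi2 r₁ r₂ ε
    rw [hα]; rfl
  have haq : Tendsto (fun ε => xi2 r₁ r₂ ε / q ε) l (𝓝 w) := by
    have h := hx2.div hqα hsumr.ne'
    have hval : (1/r₂) / (1/r₁ + 1/r₂) = w := by
      have e1 : r₁ ≠ 0 := hr₁.ne'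
      have e2 : r₂ ≠ 0 := hr₂.ne'
      have e3 : r₁ + r₂ ≠ 0 := hr12.ne'
      rw [hw]
      field_simp
      try ring
    rw [hval] at h
    apply h.congr'
    filter_upwards [hαpos] with ε hα'
    show xi2 r₁ r₂ ε / α ε / (q ε / α ε) = xi2 r₁ r₂ ε / q ε
    rw [div_div_eq_mul_div, div_mul_cancel₀ _ hα'.ne']
  have hαq : Tendsto (fun ε => α ε / q ε) l (𝓝 R) := by
    have h := hqα.inv₀ hsumr.ne'
    have hval : (1/r₁ + 1/r₂)⁻¹ = R := by
      have e1 : r₁ ≠ 0 := hr₁.ne'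
      have e2 : r₂ ≠ 0 := hr₂.ne'
      have e3 : r₁ + r₂ ≠ 0 := hr12.ne'
      rw [hR]
      field_simp
      try ring
      try tauto
    rw [hval] at h
    apply h.congr
    intro ε
    rw [inv_div]
  have hw0 : 0 < w := by rw [hw]; positivity
  have hw1 : w < 1 := by rw [hw, div_lt_one hr12]; linarith
  have hR0 : (0:ℝ) ≤ R := by rw [hR]; positivity
  have key := tendsto_alpha_tsum hw0 hw1 hR0 hev hq0 haq hαq
  have key8 := key.const_mul (8*π)
  set w₂ : ℝ := r₂ / (r₁ + r₂) with hw₂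
  have hw₂0 : 0 < w₂ := by rw [hw₂]; positivity
  have hw₂1 : w₂ ≤ 1 := by rw [hw₂, div_le_one hr12]; linarith
  have hw12 : ∀ k : ℕ, (k:ℝ) + 1 - w = (k:ℝ) + w₂ := by
    intro k
    rw [hw, hw₂]
    field_simp
    ring
  have hterm : ∀ k : ℕ, R * (1/(2*((k:ℝ)+1-w)) - 1/(2*((k:ℝ)+1)))
      = (-(R/2)) * (1/((k:ℝ)+1) - 1/((k:ℝ)+w₂)) := by
    intro k
    rw [hw12 k, one_div (2*((k:ℝ)+w₂)), mul_inv, one_div (2*((k:ℝ)+1)), mul_inv]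
    ring
  have hS : ∑' k : ℕ, R * (1/(2*((k:ℝ)+1-w)) - 1/(2*((k:ℝ)+1)))
      = (-(R/2)) * (digamma w₂ + Real.eulerMascheroniConstant) := by
    rw [tsum_congr hterm, tsum_mul_left]
    congr 1
    have hd := digamma_series hw₂0 hw₂1
    linarith
  rw [hS] at key8
  have hfinal : 8*π*((-(R/2)) * (digamma w₂ + Real.eulerMascheroniConstant))
      = 4 * π * r₁ * r₂ / (r₁ + r₂) *
        (-Real.eulerMascheroniConstant - digamma (r₂ / (r₁ + r₂))) := by
    rw [hR, ← hw₂]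
    ring
  rw [hfinal] at key8
  apply key8.congr'
  filter_upwards [hev] with ε h
  obtain ⟨h1, h2, h3⟩ := h
  have hq0' : 0 < q ε := h1.trans h2
  have hA : Summable (fun n : ℕ => Real.exp ((2*(n:ℝ)+1) * xi2 r₁ r₂ ε) /
      (Real.exp ((2*(n:ℝ)+1) * q ε) - 1)) := summable_main h1.le h2
  have hB : Summable (fun n : ℕ => 1 / (Real.exp ((2*(n:ℝ)+1) * q ε) - 1)) := by
    have hs := summable_main (le_refl (0:ℝ)) hq0'
    apply hs.congr
    intro n
    simp
  have hqe : q ε = xi1 r₁ r₂ ε + xi2 r₁ r₂ ε := rfl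
  have hαe : α ε = alphaBi r₁ r₂ ε := rfl
  show 8*π*(α ε * ∑' k : ℕ, (1/(2*Real.sinh (((k:ℝ)+1) * q ε - xi2 r₁ r₂ ε))
      - 1/(2*Real.sinh (((k:ℝ)+1) * q ε)))) = C11 r₁ r₂ ε + C12 r₁ r₂ ε
  rw [← series_identity h1 h2]
  have hsplit : ∑' n : ℕ, (Real.exp ((2*(n:ℝ)+1) * xi2 r₁ r₂ ε) - 1) /
        (Real.exp ((2*(n:ℝ)+1) * q ε) - 1)
      = (∑' n : ℕ, Real.exp ((2*(n:ℝ)+1) * xi2 r₁ r₂ ε) /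
          (Real.exp ((2*(n:ℝ)+1) * q ε) - 1))
        - ∑' n : ℕ, 1 / (Real.exp ((2*(n:ℝ)+1) * q ε) - 1) := by
    rw [← hA.tsum_sub hB]
    exact tsum_congr fun n => sub_div _ _ _
  rw [hsplit]
  unfold C11 C12
  rw [← hqe, ← hαe]
  ring

lemma alphaBi_symm (r₁ r₂ ε : ℝ) : alphaBi r₂ r₁ ε = alphaBi r₁ r₂ ε := by
  unfold alphaBi
  rw [show ε * (2 * r₂ + ε) * (2 * r₁ + ε) * (2 * r₂ + 2 * r₁ + ε)
      = ε * (2 * r₁ + ε) * (2 * r₂ + ε) * (2 * r₁ + 2 * r₂ + ε) by ring,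
    show 2 * (r₂ + r₁ + ε) = 2 * (r₁ + r₂ + ε) by ring]

lemma C_symm (r₁ r₂ ε : ℝ) : C22 r₁ r₂ ε + C21 r₁ r₂ ε = C11 r₂ r₁ ε + C12 r₂ r₁ ε := by
  unfold C22 C21 C12 C11 xi1 xi2
  simp only [alphaBi_symm r₁ r₂]
  rw [add_comm (Real.arsinh (alphaBi r₁ r₂ ε / r₁)) (Real.arsinh (alphaBi r₁ r₂ ε / r₂))]

theorem C11_add_C12_and_C22_add_C21_tendsto (r₁ r₂ : ℝ) (hr₁ : 0 < r₁) (hr₂ : 0 < r₂) :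
    Tendsto (fun ε => C11 r₁ r₂ ε + C12 r₁ r₂ ε) (𝓝[>] (0 : ℝ))
      (𝓝 (4 * π * r₁ * r₂ / (r₁ + r₂) *
        (-Real.eulerMascheroniConstant - digamma (r₂ / (r₁ + r₂))))) ∧
    Tendsto (fun ε => C22 r₁ r₂ ε + C21 r₁ r₂ ε) (𝓝[>] (0 : ℝ))
      (𝓝 (4 * π * r₁ * r₂ / (r₁ + r₂) *
        (-Real.eulerMascheroniConstant - digamma (r₁ / (r₁ + r₂))))) := by
  constructor
  · exact main_one r₁ r₂ hr₁ hr₂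
  · have h2 := main_one r₂ r₁ hr₂ hr₁
    have hfe : (fun ε => C11 r₂ r₁ ε + C12 r₂ r₁ ε) = (fun ε => C22 r₁ r₂ ε + C21 r₁ r₂ ε) :=
      funext fun ε => (C_symm r₁ r₂ ε).symm
    rw [hfe] at h2
    have hval : 4 * π * r₂ * r₁ / (r₂ + r₁) *
        (-Real.eulerMascheroniConstant - digamma (r₁ / (r₂ + r₁)))
        = 4 * π * r₁ * r₂ / (r₁ + r₂) *
          (-Real.eulerMascheroniConstant - digamma (r₁ / (r₁ + r₂))) := by
      rw [add_comm r₂ r₁]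
      ring
    rw [hval] at h2
    exact h2
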